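/- The function φ(v) = -(v² log₂ v² + 2v(1-v) log₂(2v(1-v)) + (1-v)² log₂((1-v)²)) / (2v(1-v)) on (0,1) satisfies φ(v) ≥ 3 for all v ∈ (0,1), with equality iff v = 1/2. -/

import Mathlib

open Real

/-- Cubic upper bound for the logarithm: strict for `u ≠ 0`. -/
lemma log_cubic_lt {u : ℝ} (hu : -1 < u) (h0 : u ≠ 0) :
    Real.log (1 + u) < u - u ^ 2 / 2 + u ^ 3 / 3 := by
  set f : ℝ → ℝ := fun x => x - x ^ 2 / 2 + x ^ 3 / 3 - Real.log (1 + x) with hf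
  have hderiv : ∀ x : ℝ, -1 < x → HasDerivAt f (x ^ 3 / (1 + x)) x := by
    intro x hx
    have hx1 : 0 < 1 + x := by linarith
    have h1 : HasDerivAt (fun y : ℝ => 1 + y) 1 x := by
      simpa using (hasDerivAt_id x).const_add 1
    have h2 : HasDerivAt (fun y : ℝ => Real.log (1 + y)) (1 / (1 + x)) x := by
      simpa [Function.comp_def] using (Real.hasDerivAt_log (ne_of_gt hx1)).comp x h1
    have h3 : HasDerivAt f (1 - x + x ^ 2 - 1 / (1 + x)) x := by
      have h4 : HasDerivAt (fun y : ℝ => y - y ^ 2 / 2 + y ^ 3 / 3)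
          (1 - x + x ^ 2) x := by
        have : HasDerivAt (fun y : ℝ => y - y ^ 2 / 2 + y ^ 3 / 3) _ x := (((hasDerivAt_id x).sub ((hasDerivAt_pow 2 x).div_const 2)).add
          ((hasDerivAt_pow 3 x).div_const 3))
        convert this using 1
        ring
      exact h4.sub h2
    convert h3 using 1
    field_simp
    ring
  have hcont : ∀ s : Set ℝ, s ⊆ Set.Ioi (-1 : ℝ) → ContinuousOn f s := by
    intro s hs x hx
    exact ((hderiv x (hs hx)).continuousAt).continuousWithinAt
  have hf0 : f 0 = 0 := by simp [hf]
  have key : 0 < f u := by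
    rcases lt_or_gt_of_ne h0 with hneg | hpos
    · have hanti : StrictAntiOn f (Set.Ioc (-1 : ℝ) 0) := by
        apply strictAntiOn_of_deriv_neg (convex_Ioc (-1) 0)
          (hcont _ (fun x hx => by simp at hx ⊢; linarith [hx.1]))
        intro x hx
        rw [interior_Ioc] at hx
        obtain ⟨hx1, hx2⟩ := hx
        rw [(hderiv x hx1).deriv]
        have h1x : 0 < 1 + x := by linarith
        have : x ^ 3 < 0 := Odd.pow_neg (by decide) hx2
        exact div_neg_of_neg_of_pos this h1x
      have := hanti (Set.mem_Ioc.2 ⟨hu, hneg.le⟩) (Set.mem_Ioc.2 ⟨by norm_num, le_refl 0⟩) hneg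
      simpa [hf0] using this
    · have hmono : StrictMonoOn f (Set.Ici (0 : ℝ)) := by
        apply strictMonoOn_of_deriv_pos (convex_Ici 0)
          (hcont _ (fun x hx => by simp at hx ⊢; linarith))
        intro x hx
        rw [interior_Ici] at hx
        have hx0 : 0 < x := hx
        rw [(hderiv x (by linarith)).deriv]
        positivity
      have := hmono (Set.self_mem_Ici) (Set.mem_Ici.2 hpos.le) hpos
      simpa [hf0] using this
  simpa [hf] using key


/-- The small-`v` regime of the entropy inequality. -/
lemma core_small {v : ℝ} (h0 : 0 < v) (h8 : v ≤ 1 / 8) :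
    4 * Real.log 2 * (v * (1 - v)) < -(v * Real.log v + (1 - v) * Real.log (1 - v)) := by
  have hL1 : Real.log 2 < 1 := by linarith [Real.log_two_lt_d9]
  have hL0 : 0 < Real.log 2 := Real.log_pos (by norm_num)
  have h1v : 0 < 1 - v := by linarith
  have hlv : Real.log v ≤ -(3 * Real.log 2) := by
    have h1 : Real.log v ≤ Real.log (1 / 8) := Real.log_le_log h0 h8
    have h2 : Real.log ((1 : ℝ) / 8) = -(3 * Real.log 2) := by
      rw [show (1 / 8 : ℝ) = 2 ^ (-3 : ℤ) by norm_num, Real.log_zpow]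
      push_cast
      ring
    linarith
  have hl1v : Real.log (1 - v) ≤ -v := by
    have := Real.log_le_sub_one_of_pos h1v
    linarith
  nlinarith [mul_le_mul_of_nonneg_left hlv h0.le,
    mul_le_mul_of_nonneg_left hl1v h1v.le, mul_pos h0 h1v,
    mul_pos (mul_pos h0 h1v) hL0, mul_pos h0 hL0]

/-- The middle regime of the entropy inequality. -/
lemma core_mid {v : ℝ} (h1 : 1 / 8 ≤ v) (h2 : v ≤ 7 / 8) (hne : v ≠ 1 / 2) :
    4 * Real.log 2 * (v * (1 - v)) < -(v * Real.log v + (1 - v) * Real.log (1 - v)) := by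
  have hL : 0.6931471803 < Real.log 2 := Real.log_two_gt_d9
  set u : ℝ := 2 * v - 1 with hu
  have hu1 : -1 < u := by simp [hu]; linarith
  have hu2 : u < 1 := by simp [hu]; linarith
  have hu0 : u ≠ 0 := by simp [hu]; intro h; apply hne; linarith
  have huu : u ^ 2 ≤ 9 / 16 := by nlinarith [hu]
  have hv0 : 0 < v := by linarith
  have h1v : 0 < 1 - v := by linarith
  have hA : Real.log v < u - u ^ 2 / 2 + u ^ 3 / 3 - Real.log 2 := by
    have hrw : v = (1 + u) / 2 := by rw [hu]; ring
    have := log_cubic_lt hu1 hu0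
    rw [hrw, Real.log_div (by linarith) (by norm_num)]
    linarith
  have hB : Real.log (1 - v) < -u - u ^ 2 / 2 - u ^ 3 / 3 - Real.log 2 := by
    have hrw : 1 - v = (1 + -u) / 2 := by rw [hu]; ring
    have := log_cubic_lt (by linarith : (-1 : ℝ) < -u) (by simpa using hu0)
    rw [hrw, Real.log_div (by linarith) (by norm_num)]
    nlinarith [this]
  have hApos := mul_lt_mul_of_pos_left hA hv0
  have hBpos := mul_lt_mul_of_pos_left hB h1v
  have hu2pos : 0 < u ^ 2 := by positivity
  nlinarith [hApos, hBpos, hu2pos, sq_nonneg u, mul_pos hu2pos hu2pos,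
    mul_le_mul_of_nonneg_left huu hu2pos.le]

/-- The full strict entropy inequality for `v ≠ 1/2`. -/
lemma core_ineq {v : ℝ} (h0 : 0 < v) (h1 : v < 1) (hne : v ≠ 1 / 2) :
    4 * Real.log 2 * (v * (1 - v)) < -(v * Real.log v + (1 - v) * Real.log (1 - v)) := by
  rcases le_or_gt v (1 / 8) with h | h
  · exact core_small h0 h
  rcases le_or_gt v (7 / 8) with h' | h'
  · exact core_mid h.le h' hne
  · have h2 := core_small (v := 1 - v) (by linarith) (by linarith)
    rw [show (1 : ℝ) - (1 - v) = v by ring] at h2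
    nlinarith [h2]

theorem stmt14 :
    ∀ v ∈ Set.Ioo (0 : ℝ) 1,
      3 ≤ -(v ^ 2 * Real.logb 2 (v ^ 2) + 2 * v * (1 - v) * Real.logb 2 (2 * v * (1 - v)) +
            (1 - v) ^ 2 * Real.logb 2 ((1 - v) ^ 2)) / (2 * v * (1 - v)) ∧
      (-(v ^ 2 * Real.logb 2 (v ^ 2) + 2 * v * (1 - v) * Real.logb 2 (2 * v * (1 - v)) +
            (1 - v) ^ 2 * Real.logb 2 ((1 - v) ^ 2)) / (2 * v * (1 - v)) = 3 ↔ v = 1 / 2) := by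
  intro v hv
  obtain ⟨h0, h1⟩ := hv
  have h1v : 0 < 1 - v := by linarith
  have hL : 0 < Real.log 2 := Real.log_pos (by norm_num)
  have hden : 0 < 2 * v * (1 - v) := by positivity
  have key : -(v ^ 2 * Real.logb 2 (v ^ 2) + 2 * v * (1 - v) * Real.logb 2 (2 * v * (1 - v)) +
        (1 - v) ^ 2 * Real.logb 2 ((1 - v) ^ 2)) / (2 * v * (1 - v)) - 3 =
      (-(v * Real.log v + (1 - v) * Real.log (1 - v)) - 4 * Real.log 2 * (v * (1 - v))) /
        (v * (1 - v) * Real.log 2) := by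
    rw [Real.logb, Real.logb, Real.logb, Real.log_pow, Real.log_pow,
      Real.log_mul (by positivity) (ne_of_gt h1v),
      Real.log_mul (two_ne_zero) (ne_of_gt h0)]
    push_cast
    field_simp
    ring
  rcases eq_or_ne v (1 / 2) with hv2 | hv2
  · subst hv2
    have hnum : -((1 : ℝ) / 2 * Real.log (1 / 2) + (1 - 1 / 2) * Real.log (1 - 1 / 2)) -
        4 * Real.log 2 * (1 / 2 * (1 - 1 / 2)) = 0 := by
      have hl : Real.log ((1 : ℝ) / 2) = -Real.log 2 := by
        rw [show (1 / 2 : ℝ) = 2⁻¹ by norm_num, Real.log_inv]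
      rw [show (1 : ℝ) - 1 / 2 = 1 / 2 by norm_num, hl]
      ring
    have hE : -((1 / 2 : ℝ) ^ 2 * Real.logb 2 ((1 / 2) ^ 2) +
          2 * (1 / 2) * (1 - 1 / 2) * Real.logb 2 (2 * (1 / 2) * (1 - 1 / 2)) +
          (1 - 1 / 2) ^ 2 * Real.logb 2 ((1 - 1 / 2) ^ 2)) / (2 * (1 / 2) * (1 - 1 / 2)) = 3 := by
      have h2 : (-((1 / 2 : ℝ) * Real.log (1 / 2) + (1 - 1 / 2) * Real.log (1 - 1 / 2)) -
          4 * Real.log 2 * (1 / 2 * (1 - 1 / 2))) / (1 / 2 * (1 - 1 / 2) * Real.log 2) = 0 := by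
        rw [hnum, zero_div]
      rw [h2] at key
      linarith
    exact ⟨le_of_eq hE.symm, fun _ => rfl, fun _ => hE⟩
  · have hD := core_ineq h0 h1 hv2
    have hpos : 0 < (-(v * Real.log v + (1 - v) * Real.log (1 - v)) -
        4 * Real.log 2 * (v * (1 - v))) / (v * (1 - v) * Real.log 2) := by
      apply div_pos (by linarith) (by positivity)
    rw [← key] at hpos
    constructor
    · linarith
    · constructor
      · intro h
        exfalso
        rw [h] at hpos
        norm_num at hpos
      · intro h
        exact absurd h hv2
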